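/- The function ℓ_2(t) = −3 e^{5t} + e^{15t} + 2 cos(5√3 t) satisfies ℓ_2(0)=ℓ_2'(0)=ℓ_2''(0)=0 and ℓ_2'''(t)>0 for all t∈[0,1]; consequently ℓ_2(t)>0 for all t∈(0,1]. -/

import Mathlib

open Real Set

noncomputable def L0 : ℝ → ℝ := fun t => -3 * exp (5 * t) + exp (15 * t) + 2 * cos (5 * Real.sqrt 3 * t)
noncomputable def L1 : ℝ → ℝ := fun t => -15 * exp (5 * t) + 15 * exp (15 * t) - 10 * Real.sqrt 3 * sin (5 * Real.sqrt 3 * t)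
noncomputable def L2 : ℝ → ℝ := fun t => -75 * exp (5 * t) + 225 * exp (15 * t) - 150 * cos (5 * Real.sqrt 3 * t)
noncomputable def L3 : ℝ → ℝ := fun t => -375 * exp (5 * t) + 3375 * exp (15 * t) + 750 * Real.sqrt 3 * sin (5 * Real.sqrt 3 * t)

lemma sq3 : Real.sqrt 3 * Real.sqrt 3 = 3 := Real.mul_self_sqrt (by norm_num)

lemma hd0 (t : ℝ) : HasDerivAt L0 (L1 t) t := by
  have h1 : HasDerivAt (fun t : ℝ => exp (5 * t)) (exp (5 * t) * 5) t := by
    simpa using ((hasDerivAt_id t).const_mul (5:ℝ)).exp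
  have h2 : HasDerivAt (fun t : ℝ => exp (15 * t)) (exp (15 * t) * 15) t := by
    simpa using ((hasDerivAt_id t).const_mul (15:ℝ)).exp
  have h3 : HasDerivAt (fun t : ℝ => cos (5 * Real.sqrt 3 * t)) (-sin (5 * Real.sqrt 3 * t) * (5 * Real.sqrt 3)) t := by
    simpa using ((hasDerivAt_id t).const_mul (5 * Real.sqrt 3)).cos
  have := ((h1.const_mul (-3:ℝ)).add h2).add (h3.const_mul (2:ℝ))
  refine this.congr_deriv ?_
  simp [L1]; ring

lemma hd1 (t : ℝ) : HasDerivAt L1 (L2 t) t := by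
  have h1 : HasDerivAt (fun t : ℝ => exp (5 * t)) (exp (5 * t) * 5) t := by
    simpa using ((hasDerivAt_id t).const_mul (5:ℝ)).exp
  have h2 : HasDerivAt (fun t : ℝ => exp (15 * t)) (exp (15 * t) * 15) t := by
    simpa using ((hasDerivAt_id t).const_mul (15:ℝ)).exp
  have h3 : HasDerivAt (fun t : ℝ => sin (5 * Real.sqrt 3 * t)) (cos (5 * Real.sqrt 3 * t) * (5 * Real.sqrt 3)) t := by
    simpa using ((hasDerivAt_id t).const_mul (5 * Real.sqrt 3)).sin
  have := ((h1.const_mul (-15:ℝ)).add (h2.const_mul (15:ℝ))).sub (h3.const_mul (10 * Real.sqrt 3))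
  refine this.congr_deriv ?_
  simp only [L2]
  linear_combination (-50 * cos (5 * Real.sqrt 3 * t)) * sq3

lemma hd2 (t : ℝ) : HasDerivAt L2 (L3 t) t := by
  have h1 : HasDerivAt (fun t : ℝ => exp (5 * t)) (exp (5 * t) * 5) t := by
    simpa using ((hasDerivAt_id t).const_mul (5:ℝ)).exp
  have h2 : HasDerivAt (fun t : ℝ => exp (15 * t)) (exp (15 * t) * 15) t := by
    simpa using ((hasDerivAt_id t).const_mul (15:ℝ)).exp
  have h3 : HasDerivAt (fun t : ℝ => cos (5 * Real.sqrt 3 * t)) (-sin (5 * Real.sqrt 3 * t) * (5 * Real.sqrt 3)) t := by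
    simpa using ((hasDerivAt_id t).const_mul (5 * Real.sqrt 3)).cos
  have := ((h1.const_mul (-75:ℝ)).add (h2.const_mul (225:ℝ))).sub (h3.const_mul (150:ℝ))
  refine this.congr_deriv ?_
  simp [L3]; ring

lemma L3_pos {t : ℝ} (ht : 0 ≤ t) : 0 < L3 t := by
  have he : exp (5 * t) ≤ exp (15 * t) := exp_le_exp.mpr (by linarith)
  have h1 : (1:ℝ) ≤ exp (5 * t) := by
    rw [show (1:ℝ) = exp 0 by simp]; exact exp_le_exp.mpr (by linarith)
  have hs : -1 ≤ sin (5 * Real.sqrt 3 * t) := neg_one_le_sin _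
  have hr : Real.sqrt 3 ≤ 2 := by
    nlinarith [sq3, Real.sqrt_nonneg 3]
  have hr0 : 0 ≤ Real.sqrt 3 := Real.sqrt_nonneg 3
  simp only [L3]
  nlinarith [mul_le_mul_of_nonneg_left hs (by positivity : (0:ℝ) ≤ 750 * Real.sqrt 3)]

lemma dL0 : deriv L0 = L1 := funext fun t => (hd0 t).deriv
lemma dL1 : deriv L1 = L2 := funext fun t => (hd1 t).deriv
lemma dL2 : deriv L2 = L3 := funext fun t => (hd2 t).deriv



lemma mono2 : StrictMonoOn L2 (Ici 0) := by
  apply strictMonoOn_of_deriv_pos (convex_Ici 0)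
    ((continuous_iff_continuousAt.mpr fun t => (hd2 t).continuousAt).continuousOn)
  · intro x hx
    rw [dL2]
    exact L3_pos (le_of_lt (by simpa using hx))

lemma L2_pos {t : ℝ} (ht : 0 < t) : 0 < L2 t := by
  have h0 : L2 0 = 0 := by norm_num [L2]
  have := mono2 (le_refl (0:ℝ)) (le_of_lt ht) ht
  linarith [this]

lemma mono1 : StrictMonoOn L1 (Ici 0) := by
  apply strictMonoOn_of_deriv_pos (convex_Ici 0)
    ((continuous_iff_continuousAt.mpr fun t => (hd1 t).continuousAt).continuousOn)
  intro x hx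
  rw [dL1]
  exact L2_pos (by simpa using hx)

lemma L1_pos {t : ℝ} (ht : 0 < t) : 0 < L1 t := by
  have h0 : L1 0 = 0 := by norm_num [L1]
  have := mono1 (le_refl (0:ℝ)) (le_of_lt ht) ht
  linarith

lemma mono0 : StrictMonoOn L0 (Ici 0) := by
  apply strictMonoOn_of_deriv_pos (convex_Ici 0)
    ((continuous_iff_continuousAt.mpr fun t => (hd0 t).continuousAt).continuousOn)
  intro x hx
  rw [dL0]
  exact L1_pos (by simpa using hx)

lemma L0_pos {t : ℝ} (ht : 0 < t) : 0 < L0 t := by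
  have h0 : L0 0 = 0 := by norm_num [L0]
  have := mono0 (le_refl (0:ℝ)) (le_of_lt ht) ht
  linarith

/-- `ℓ₂(t) = −3e^{5t} + e^{15t} + 2cos(5√3 t)` vanishes to order 3 at 0,
has positive third derivative on `[0,1]`, and hence is positive on `(0,1]`. -/
theorem stmt_6 :
    let l : ℝ → ℝ := fun t => -3 * exp (5 * t) + exp (15 * t) + 2 * cos (5 * Real.sqrt 3 * t)
    l 0 = 0 ∧ deriv l 0 = 0 ∧ iteratedDeriv 2 l 0 = 0 ∧
    (∀ t ∈ Icc (0 : ℝ) 1, 0 < iteratedDeriv 3 l t) ∧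
    (∀ t ∈ Ioc (0 : ℝ) 1, 0 < l t) := by
  intro l
  have hl : l = L0 := rfl
  have h2 : iteratedDeriv 2 l = L2 := by
    rw [hl, iteratedDeriv_succ, iteratedDeriv_one, dL0, dL1]
  have h3 : iteratedDeriv 3 l = L3 := by
    rw [hl, show (3:ℕ) = 2 + 1 from rfl, iteratedDeriv_succ, ← hl, h2, dL2]
  refine ⟨by norm_num [hl, L0], by rw [hl, dL0]; norm_num [L1], by rw [h2]; norm_num [L2], ?_, ?_⟩
  · intro t ht; rw [h3]; exact L3_pos ht.1
  · intro t ht; rw [hl]; exact L0_pos ht.1
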